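/- Let i ∈ N be a buyer and ξ ∈ ℝ_{≥0}^{E_i} with ξ(E_i) ≤ d_i. Then for every Y ⊆ N−i, min_{F ⊆ E_i} ( f_{w,d}(E_Y ∪ F) − ξ(F) ) = min_{Z ⊆ Y, F ⊆ E_i} ( f_w(E_Z ∪ F) + d(Y \ Z) − ξ(F) ). -/

import Mathlib

open Finset

noncomputable section

namespace TwoSidedMarket

variable {B S : Type*} [Fintype B] [Fintype S] [DecidableEq B] [DecidableEq S]

/-- A function `f` on subsets of a ground set `G` is monotone submodular:
`f ∅ = 0`, monotone on subsets of `G`, and submodular on subsets of `G`. -/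
def IsMonoSubmodular {α : Type*} [DecidableEq α] (G : Finset α) (f : Finset α → ℝ) : Prop :=
  f ∅ = 0 ∧ (∀ A B : Finset α, A ⊆ B → B ⊆ G → f A ≤ f B) ∧
    ∀ A B : Finset α, A ⊆ G → B ⊆ G → f (A ∩ B) + f (A ∪ B) ≤ f A + f B

/-- Monotone submodular, without the requirement of vanishing at `∅`. -/
def IsMonoSubmodularWeak {α : Type*} [DecidableEq α] (G : Finset α) (f : Finset α → ℝ) : Prop :=
  (∀ A B : Finset α, A ⊆ B → B ⊆ G → f A ≤ f B) ∧
    ∀ A B : Finset α, A ⊆ G → B ⊆ G → f (A ∩ B) + f (A ∪ B) ≤ f A + f B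

/-- `E_i`: the edges of `E` incident to buyer `i`. -/
def Ei (E : Finset (B × S)) (i : B) : Finset (B × S) := E.filter fun e => e.1 = i

/-- `E_j`: the edges of `E` incident to seller `j`. -/
def Ej (E : Finset (B × S)) (j : S) : Finset (B × S) := E.filter fun e => e.2 = j

/-- `E_X`: the edges of `E` incident to some buyer in `X`. -/
def EX (E : Finset (B × S)) (X : Finset B) : Finset (B × S) := E.filter fun e => e.1 ∈ X

/-- `N_F`: the buyers incident to some edge of `F`. -/
def NF (F : Finset (B × S)) : Finset B := F.image Prod.fst

/-- `x(F) = Σ_{e ∈ F} x e`. -/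
def vsum (x : B × S → ℝ) (F : Finset (B × S)) : ℝ := ∑ e ∈ F, x e

/-- Membership `w ∈ P = ⊕_j P_j`: `w` is nonnegative, supported on `E`, and
`w|_{E_j} ∈ P_j` for every seller `j`. -/
def memP (E : Finset (B × S)) (fj : S → Finset (B × S) → ℝ) (w : B × S → ℝ) : Prop :=
  (∀ e, 0 ≤ w e) ∧ (∀ e ∉ E, w e = 0) ∧ ∀ j : S, ∀ F ⊆ Ej E j, vsum w F ≤ fj j F

/-- `f(F) := Σ_{j ∈ M} f_j (E_j ∩ F)`. -/
def fTot (E : Finset (B × S)) (fj : S → Finset (B × S) → ℝ) (F : Finset (B × S)) : ℝ :=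
  ∑ j : S, fj j (Ej E j ∩ F)

/-- `f_w(F) := min_{F ⊆ F' ⊆ E} (f(F') - w(F'))`. -/
def fw (E : Finset (B × S)) (fj : S → Finset (B × S) → ℝ)
    (w : B × S → ℝ) (F : Finset (B × S)) : ℝ :=
  sInf {r : ℝ | ∃ F' : Finset (B × S), F ⊆ F' ∧ F' ⊆ E ∧ r = fTot E fj F' - vsum w F'}

/-- Membership in the remnant supply polytope `P_{w,d}`. -/
def memPwd (E : Finset (B × S)) (fj : S → Finset (B × S) → ℝ)
    (w : B × S → ℝ) (d : B → ℝ) (x : B × S → ℝ) : Prop :=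
  (∀ e, 0 ≤ x e) ∧ (∀ e ∉ E, x e = 0) ∧ memP E fj (w + x) ∧
    ∀ i : B, vsum x (Ei E i) ≤ d i

/-- `f_{w,d}(F) := max_{x ∈ P_{w,d}} x(F)`. -/
def fwd (E : Finset (B × S)) (fj : S → Finset (B × S) → ℝ)
    (w : B × S → ℝ) (d : B → ℝ) (F : Finset (B × S)) : ℝ :=
  sSup {r : ℝ | ∃ x : B × S → ℝ, memPwd E fj w d x ∧ r = vsum x F}

/-- `P^i_{w,d}(ξ)`: the remnant supply polytope of the buyers other than `i`,
given that buyer `i` receives `ξ`.  (Vectors indexed by `N - i` are encoded as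
functions on all of `B` vanishing at `i`.) -/
def PiWd (E : Finset (B × S)) (fj : S → Finset (B × S) → ℝ)
    (w : B × S → ℝ) (d : B → ℝ) (i : B) (ξ : B × S → ℝ) : Set (B → ℝ) :=
  {u | u i = 0 ∧ (∀ k, 0 ≤ u k) ∧
    ∃ x : B × S → ℝ, memPwd E fj w d x ∧ (∀ e ∈ Ei E i, x e = ξ e) ∧
      ∀ k : B, k ≠ i → vsum x (Ei E k) = u k}

/-- The clinching polytope `P^i_{w,d}` of buyer `i`:
all `ξ ∈ ℝ_{≥0}^{E_i}` with `P^i_{w,d}(ξ) = P^i_{w,d}(0)`. -/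
def ClinchP (E : Finset (B × S)) (fj : S → Finset (B × S) → ℝ)
    (w : B × S → ℝ) (d : B → ℝ) (i : B) : Set (B × S → ℝ) :=
  {ξ | (∀ e, 0 ≤ ξ e) ∧ (∀ e ∉ Ei E i, ξ e = 0) ∧
    PiWd E fj w d i ξ = PiWd E fj w d i 0}


set_option linter.unusedSectionVars false

-- ## basic vsum lemmas

lemma vsum_nonneg {x : B × S → ℝ} (hx : ∀ e, 0 ≤ x e) (F : Finset (B × S)) : 0 ≤ vsum x F :=
  Finset.sum_nonneg fun e _ => hx e

lemma vsum_mono {x : B × S → ℝ} (hx : ∀ e, 0 ≤ x e) {A C : Finset (B × S)} (h : A ⊆ C) :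
    vsum x A ≤ vsum x C :=
  Finset.sum_le_sum_of_subset_of_nonneg h fun e _ _ => hx e

lemma vsum_union_le {x : B × S → ℝ} (hx : ∀ e, 0 ≤ x e) (A C : Finset (B × S)) :
    vsum x (A ∪ C) ≤ vsum x A + vsum x C := by
  have h := Finset.sum_union_inter (s₁ := A) (s₂ := C) (f := x)
  have h2 : 0 ≤ vsum x (A ∩ C) := vsum_nonneg hx _
  unfold vsum at *; linarith

lemma vsum_add (x y : B × S → ℝ) (F : Finset (B × S)) :
    vsum (x + y) F = vsum x F + vsum y F := by
  unfold vsum; simp [Finset.sum_add_distrib]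

lemma vsum_seller (E : Finset (B × S)) (x : B × S → ℝ) {F : Finset (B × S)} (hF : F ⊆ E) :
    vsum x F = ∑ j : S, vsum x (Ej E j ∩ F) := by
  have h1 : ∀ j : S, Ej E j ∩ F = F.filter fun e => e.2 = j := by
    intro j; ext e
    simp only [Ej, mem_inter, mem_filter]
    constructor
    · rintro ⟨⟨_, h2⟩, h3⟩; exact ⟨h3, h2⟩
    · rintro ⟨h3, h2⟩; exact ⟨⟨hF h3, h2⟩, h3⟩
  rw [show (∑ j : S, vsum x (Ej E j ∩ F)) = ∑ j : S, ∑ e ∈ F.filter fun e => e.2 = j, x e from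
    Finset.sum_congr rfl fun j _ => by rw [h1 j]; rfl]
  exact (Finset.sum_fiberwise_of_maps_to (fun e _ => Finset.mem_univ e.2) x).symm

lemma vsum_buyer (E : Finset (B × S)) (x : B × S → ℝ) (Y : Finset B) :
    vsum x (EX E Y) = ∑ k ∈ Y, vsum x (Ei E k) := by
  have h1 : ∀ k ∈ Y, (EX E Y).filter (fun e => e.1 = k) = Ei E k := by
    intro k hk; ext e
    simp only [EX, Ei, mem_filter]
    constructor
    · rintro ⟨⟨a, _⟩, c⟩; exact ⟨a, c⟩
    · rintro ⟨a, c⟩; exact ⟨⟨a, c ▸ hk⟩, c⟩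
  rw [show (∑ k ∈ Y, vsum x (Ei E k)) = ∑ k ∈ Y, ∑ e ∈ (EX E Y).filter fun e => e.1 = k, x e from
    Finset.sum_congr rfl fun k hk => by rw [h1 k hk]; rfl]
  exact (Finset.sum_fiberwise_of_maps_to (fun e he => by
    simp only [EX, mem_filter] at he; exact he.2) x).symm

lemma vsum_support {x : B × S → ℝ} {G : Finset (B × S)} (hx : ∀ e ∉ G, x e = 0)
    (F : Finset (B × S)) : vsum x F = vsum x (F ∩ G) := by
  refine (Finset.sum_subset Finset.inter_subset_left fun e he hne => ?_).symm
  exact hx e fun hG => hne (Finset.mem_inter.mpr ⟨he, hG⟩)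

-- fTot / fw lemmas, to be appended after part1 content
section Part2
variable {E : Finset (B × S)} {fj : S → Finset (B × S) → ℝ} {w : B × S → ℝ}
variable (hfj : ∀ j : S, IsMonoSubmodular (Ej E j) (fj j))

include hfj in
lemma fTot_empty : fTot E fj ∅ = 0 := by
  unfold fTot
  rw [Finset.sum_eq_zero]
  intro j _
  rw [Finset.inter_empty]
  exact (hfj j).1

include hfj in
lemma fTot_mono {A C : Finset (B × S)} (h : A ⊆ C) : fTot E fj A ≤ fTot E fj C := by
  refine Finset.sum_le_sum fun j _ => ?_
  exact (hfj j).2.1 _ _ (Finset.inter_subset_inter_left h) Finset.inter_subset_left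

include hfj in
lemma fTot_submod (A C : Finset (B × S)) :
    fTot E fj (A ∩ C) + fTot E fj (A ∪ C) ≤ fTot E fj A + fTot E fj C := by
  unfold fTot
  rw [← Finset.sum_add_distrib, ← Finset.sum_add_distrib]
  refine Finset.sum_le_sum fun j _ => ?_
  have h1 : Ej E j ∩ (A ∩ C) = (Ej E j ∩ A) ∩ (Ej E j ∩ C) := by ext e; simp; tauto
  have h2 : Ej E j ∩ (A ∪ C) = (Ej E j ∩ A) ∪ (Ej E j ∩ C) := by ext e; simp; tauto
  rw [h1, h2]
  exact (hfj j).2.2 _ _ Finset.inter_subset_left Finset.inter_subset_left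

include hfj in
lemma fTot_of_subset_Ej {j : S} {F : Finset (B × S)} (h : F ⊆ Ej E j) :
    fTot E fj F = fj j F := by
  unfold fTot
  rw [Finset.sum_eq_single j]
  · rw [Finset.inter_eq_right.mpr h]
  · intro j' _ hne
    have : Ej E j' ∩ F = ∅ := by
      ext e
      simp only [Ej, mem_inter, mem_filter, notMem_empty, iff_false]
      rintro ⟨⟨_, h2⟩, h3⟩
      have := h h3
      simp only [Ej, mem_filter] at this
      exact hne (h2 ▸ this.2.symm ▸ rfl)
    rw [this]; exact (hfj j').1
  · intro h'; exact absurd (Finset.mem_univ j) h'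

/-- candidates for the min defining fw -/
def Fcands (E : Finset (B × S)) (F : Finset (B × S)) : Finset (Finset (B × S)) :=
  E.powerset.filter fun F' => F ⊆ F'

lemma Fcands_nonempty {F : Finset (B × S)} (hF : F ⊆ E) : (Fcands E F).Nonempty :=
  ⟨E, by simp [Fcands, hF]⟩

lemma fw_eq_inf' {F : Finset (B × S)} (hF : F ⊆ E) :
    fw E fj w F = (Fcands E F).inf' (Fcands_nonempty hF)
      (fun F' => fTot E fj F' - vsum w F') := by
  rw [Finset.inf'_eq_csInf_image]
  unfold fw
  congr 1
  ext r
  simp only [Set.mem_setOf_eq, Set.mem_image, Finset.mem_coe, Fcands, mem_filter, mem_powerset]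
  constructor
  · rintro ⟨F', h1, h2, h3⟩; exact ⟨F', ⟨h2, h1⟩, h3.symm⟩
  · rintro ⟨F', ⟨h2, h1⟩, h3⟩; exact ⟨F', h1, h2, h3.symm⟩

lemma fw_le {F F' : Finset (B × S)} (h1 : F ⊆ F') (h2 : F' ⊆ E) :
    fw E fj w F ≤ fTot E fj F' - vsum w F' := by
  rw [fw_eq_inf' (h1.trans h2)]
  exact Finset.inf'_le _ (by simp [Fcands, h1, h2])

lemma le_fw {F : Finset (B × S)} (hF : F ⊆ E) {c : ℝ}
    (h : ∀ F', F ⊆ F' → F' ⊆ E → c ≤ fTot E fj F' - vsum w F') :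
    c ≤ fw E fj w F := by
  rw [fw_eq_inf' hF]
  refine Finset.le_inf' _ _ fun F' hF' => ?_
  simp only [Fcands, mem_filter, mem_powerset] at hF'
  exact h F' hF'.2 hF'.1

lemma fw_exists {F : Finset (B × S)} (hF : F ⊆ E) :
    ∃ F', F ⊆ F' ∧ F' ⊆ E ∧ fw E fj w F = fTot E fj F' - vsum w F' := by
  obtain ⟨F', hmem, heq⟩ := Finset.exists_mem_eq_inf' (Fcands_nonempty hF)
    (fun F' => fTot E fj F' - vsum w F')
  simp only [Fcands, mem_filter, mem_powerset] at hmem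
  exact ⟨F', hmem.2, hmem.1, by rw [fw_eq_inf' hF, heq]⟩

/-- `w ∈ P` gives `w(F) ≤ f(F)` for `F ⊆ E`. -/
lemma vsum_le_fTot (hfj : ∀ j : S, IsMonoSubmodular (Ej E j) (fj j))
    (hP : ∀ j : S, ∀ F ⊆ Ej E j, vsum w F ≤ fj j F)
    {F : Finset (B × S)} (hF : F ⊆ E) : vsum w F ≤ fTot E fj F := by
  rw [vsum_seller E w hF]
  exact Finset.sum_le_sum fun j _ => hP j _ Finset.inter_subset_left

end Part2
section Part3
variable {E : Finset (B × S)} {fj : S → Finset (B × S) → ℝ} {w : B × S → ℝ}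
variable (hfj : ∀ j : S, IsMonoSubmodular (Ej E j) (fj j))
variable (hP : ∀ j : S, ∀ F ⊆ Ej E j, vsum w F ≤ fj j F)

include hfj hP in
lemma fw_nonneg {F : Finset (B × S)} (hF : F ⊆ E) : 0 ≤ fw E fj w F :=
  le_fw hF fun F' _ h2 => by linarith [vsum_le_fTot hfj hP h2]

include hfj hP in
lemma fw_empty : fw E fj w ∅ = 0 := by
  refine le_antisymm ?_ (fw_nonneg hfj hP (Finset.empty_subset E))
  have := fw_le (E := E) (fj := fj) (w := w) (Finset.empty_subset ∅) (Finset.empty_subset E)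
  simpa [fTot_empty hfj, vsum] using this

lemma fw_mono {A C : Finset (B × S)} (h : A ⊆ C) (hC : C ⊆ E) :
    fw E fj w A ≤ fw E fj w C := by
  obtain ⟨F', h1, h2, h3⟩ := fw_exists (fj := fj) (w := w) hC
  rw [h3]
  exact fw_le (h.trans h1) h2

include hfj in
lemma fw_submod (A C : Finset (B × S)) (hA : A ⊆ E) (hC : C ⊆ E) :
    fw E fj w (A ∩ C) + fw E fj w (A ∪ C) ≤ fw E fj w A + fw E fj w C := by
  obtain ⟨FA, h1, h2, h3⟩ := fw_exists (fj := fj) (w := w) hA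
  obtain ⟨FC, h4, h5, h6⟩ := fw_exists (fj := fj) (w := w) hC
  have hi : fw E fj w (A ∩ C) ≤ fTot E fj (FA ∩ FC) - vsum w (FA ∩ FC) :=
    fw_le (Finset.inter_subset_inter h1 h4) (Finset.inter_subset_left.trans h2)
  have hu : fw E fj w (A ∪ C) ≤ fTot E fj (FA ∪ FC) - vsum w (FA ∪ FC) :=
    fw_le (Finset.union_subset_union h1 h4) (Finset.union_subset h2 h5)
  have hsub := fTot_submod hfj FA FC
  have hmod := Finset.sum_union_inter (s₁ := FA) (s₂ := FC) (f := w)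
  unfold vsum at *
  linarith

end Part3

-- ## theta and the existence theorem (polymatroid ∩ partition capacities)
section Theta

/-- `G` minus the edges of buyers in `K`. -/
def EXc (K : Finset B) (G : Finset (B × S)) : Finset (B × S) := G.filter fun e => e.1 ∉ K

def theta (g : Finset (B × S) → ℝ) (d : B → ℝ) (G : Finset (B × S)) : ℝ :=
  (Finset.univ : Finset B).powerset.inf' ⟨∅, Finset.empty_mem_powerset _⟩
    fun K => (∑ k ∈ K, d k) + g (EXc K G)

lemma theta_le (g : Finset (B × S) → ℝ) (d : B → ℝ) (G : Finset (B × S)) (K : Finset B) :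
    theta g d G ≤ (∑ k ∈ K, d k) + g (EXc K G) :=
  Finset.inf'_le _ (Finset.mem_powerset.mpr (Finset.subset_univ K))

lemma theta_exists (g : Finset (B × S) → ℝ) (d : B → ℝ) (G : Finset (B × S)) :
    ∃ K : Finset B, theta g d G = (∑ k ∈ K, d k) + g (EXc K G) := by
  obtain ⟨K, _, h⟩ := Finset.exists_mem_eq_inf'
    (⟨∅, Finset.empty_mem_powerset _⟩ : ((Finset.univ : Finset B).powerset).Nonempty)
    (fun K => (∑ k ∈ K, d k) + g (EXc K G))
  exact ⟨K, h⟩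

end Theta
section Exists

lemma exists_opt (n : ℕ) : ∀ (G : Finset (B × S)), G.card = n →
    ∀ (g : Finset (B × S) → ℝ), g ∅ = 0 →
    (∀ {A C : Finset (B × S)}, A ⊆ C → g A ≤ g C) →
    (∀ A C : Finset (B × S), g (A ∩ C) + g (A ∪ C) ≤ g A + g C) →
    ∀ (d : B → ℝ), (∀ k, 0 ≤ d k) →
    ∃ x : B × S → ℝ, (∀ e, 0 ≤ x e) ∧ (∀ e ∉ G, x e = 0) ∧
      (∀ F : Finset (B × S), vsum x F ≤ g F) ∧
      (∀ k : B, vsum x (G.filter fun e => e.1 = k) ≤ d k) ∧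
      theta g d G ≤ vsum x G := by
  induction n using Nat.strong_induction_on with
  | _ n IH =>
    intro G hGcard g hg0 hgm hgs d hd
    rcases Finset.eq_empty_or_nonempty G with hG | ⟨e₀, he₀⟩
    · refine ⟨0, fun e => le_refl 0, fun e _ => rfl, ?_, ?_, ?_⟩
      · intro F
        have : (0:ℝ) ≤ g F := hg0 ▸ hgm (Finset.empty_subset F)
        simpa [vsum] using this
      · intro k; simpa [vsum] using hd k
      · have h1 := theta_le g d G ∅
        have h2 : EXc (∅ : Finset B) G = ∅ := by simp [EXc, hG]
        simp only [h2, Finset.sum_empty, zero_add, hg0] at h1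
        simpa [vsum] using h1
    · -- inductive step
      set k₀ := e₀.1 with hk₀
      set θ := theta g d G with hθdef
      have hT3ne : ((Finset.univ : Finset B).powerset.filter fun K => k₀ ∈ K).Nonempty :=
        ⟨Finset.univ, by simp⟩
      set α := min (d k₀) (min (g {e₀})
        (((Finset.univ : Finset B).powerset.filter fun K => k₀ ∈ K).inf' hT3ne
          fun K => (∑ k ∈ K, d k) + g (insert e₀ (EXc K G)) - θ)) with hαdef
      have hα1 : α ≤ d k₀ := min_le_left _ _
      have hα2 : α ≤ g {e₀} := le_trans (min_le_right _ _) (min_le_left _ _)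
      have hα3 : ∀ K : Finset B, k₀ ∈ K →
          α ≤ (∑ k ∈ K, d k) + g (insert e₀ (EXc K G)) - θ := fun K hK =>
        le_trans (min_le_right _ _) (le_trans (min_le_right _ _)
          (Finset.inf'_le _ (by simp [hK])))
      have hα0 : 0 ≤ α := by
        refine le_min (hd _) (le_min (hg0 ▸ hgm (Finset.empty_subset {e₀})) ?_)
        refine Finset.le_inf' _ _ fun K hK => ?_
        have h1 := theta_le g d G K
        have h2 : g (EXc K G) ≤ g (insert e₀ (EXc K G)) := hgm (Finset.subset_insert _ _)
        rw [← hθdef] at h1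
        linarith
      -- the key lower bound on θ for K not containing k₀
      have hlow : ∀ K : Finset B, k₀ ∉ K →
          θ ≤ α + (∑ k ∈ K, d k) + g ((EXc K G).erase e₀) := by
        intro K hK
        have he₀K : e₀ ∈ EXc K G := by simp [EXc, he₀, ← hk₀, hK]
        have goal : θ - (∑ k ∈ K, d k) - g ((EXc K G).erase e₀) ≤ α := by
          refine le_min ?_ (le_min ?_ ?_)
          · -- (a) vs d k₀
            have h1 := theta_le g d G (insert k₀ K)
            rw [← hθdef] at h1
            have h2 : ∑ k ∈ insert k₀ K, d k = d k₀ + ∑ k ∈ K, d k :=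
              Finset.sum_insert hK
            have h3 : EXc (insert k₀ K) G ⊆ (EXc K G).erase e₀ := by
              intro e hee
              simp only [EXc, Finset.mem_filter, Finset.mem_insert, not_or] at hee
              simp only [Finset.mem_erase, EXc, Finset.mem_filter]
              exact ⟨fun hcontra => hee.2.1 (hcontra ▸ rfl), hee.1, hee.2.2⟩
            have h4 := hgm h3
            linarith
          · -- (b) vs g {e₀}
            have h1 := theta_le g d G K
            rw [← hθdef] at h1
            have h2 := hgs {e₀} ((EXc K G).erase e₀)
            have h3 : {e₀} ∩ (EXc K G).erase e₀ = ∅ := by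
              ext e
              simp only [Finset.mem_inter, Finset.mem_singleton, Finset.mem_erase,
                Finset.notMem_empty, iff_false]
              rintro ⟨rfl, hne, _⟩; exact hne rfl
            have h4 : {e₀} ∪ (EXc K G).erase e₀ = EXc K G := by
              rw [← Finset.insert_eq, Finset.insert_erase he₀K]
            rw [h3, h4, hg0] at h2
            linarith
          · -- (c) uncrossing
            refine Finset.le_inf' _ _ fun K' hK' => ?_
            simp only [Finset.mem_filter, Finset.mem_powerset] at hK'
            have hk₀K' : k₀ ∈ K' := hK'.2
            set X := insert e₀ (EXc K' G) with hX
            set Y := (EXc K G).erase e₀ with hY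
            have hXY1 : X ∩ Y = EXc (K ∪ K') G := by
              ext e
              simp only [hX, hY, Finset.mem_inter, Finset.mem_insert, Finset.mem_erase,
                EXc, Finset.mem_filter, Finset.mem_union, not_or]
              constructor
              · rintro ⟨h1, h2, h3, h4⟩
                rcases h1 with rfl | ⟨h5, h6⟩
                · exact absurd rfl h2
                · exact ⟨h3, h4, h6⟩
              · rintro ⟨h3, h4, h6⟩
                have hne : e ≠ e₀ := fun hcontra => h6 (hcontra ▸ hk₀K')
                exact ⟨Or.inr ⟨h3, h6⟩, hne, h3, h4⟩
            have hXY2 : X ∪ Y = EXc (K ∩ K') G := by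
              ext e
              simp only [hX, hY, Finset.mem_union, Finset.mem_insert, Finset.mem_erase,
                EXc, Finset.mem_filter, Finset.mem_inter]
              constructor
              · rintro ((rfl | ⟨h1, h2⟩) | ⟨h1, h2, h3⟩)
                · exact ⟨he₀, fun hcontra => hK hcontra.1⟩
                · exact ⟨h1, fun hcontra => h2 hcontra.2⟩
                · exact ⟨h2, fun hcontra => h3 hcontra.1⟩
              · rintro ⟨h1, h2⟩
                by_cases he : e = e₀
                · exact Or.inl (Or.inl he)
                · by_cases hc : e.1 ∈ K'
                  · exact Or.inr ⟨he, h1, fun hcontra => h2 ⟨hcontra, hc⟩⟩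
                  · exact Or.inl (Or.inr ⟨h1, hc⟩)
            have hsub := hgs X Y
            rw [hXY1, hXY2] at hsub
            have h1 := theta_le g d G (K ∪ K')
            have h2 := theta_le g d G (K ∩ K')
            rw [← hθdef] at h1 h2
            have h3 := Finset.sum_union_inter (s₁ := K) (s₂ := K') (f := d)
            linarith
        linarith
      -- contracted function
      set g' := fun F : Finset (B × S) => min (g (F.erase e₀)) (g (insert e₀ F) - α)
        with hg'def
      have hg'0 : g' ∅ = 0 := by
        have hie : insert e₀ (∅ : Finset (B × S)) = {e₀} := by simp
        simp only [hg'def, Finset.erase_empty, hie, hg0]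
        have h : (0:ℝ) ≤ g {e₀} - α := by linarith
        exact min_eq_left h
      have hg'm : ∀ {A C : Finset (B × S)}, A ⊆ C → g' A ≤ g' C := by
        intro A C h
        exact min_le_min (hgm (Finset.erase_subset_erase _ h))
          (sub_le_sub_right (hgm (Finset.insert_subset_insert _ h)) α)
      have hg's : ∀ A C : Finset (B × S), g' (A ∩ C) + g' (A ∪ C) ≤ g' A + g' C := by
        intro A C
        have hi1 : (A ∩ C).erase e₀ = A.erase e₀ ∩ C.erase e₀ := by
          ext e; simp only [Finset.mem_erase, Finset.mem_inter]; tauto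
        have hi2 : (A ∪ C).erase e₀ = A.erase e₀ ∪ C.erase e₀ := by
          ext e; simp only [Finset.mem_erase, Finset.mem_union]; tauto
        have hi3 : insert e₀ (A ∩ C) = insert e₀ A ∩ insert e₀ C := by
          ext e; simp only [Finset.mem_insert, Finset.mem_inter]; tauto
        have hi4 : insert e₀ (A ∪ C) = insert e₀ A ∪ insert e₀ C := by
          ext e; simp only [Finset.mem_insert, Finset.mem_union]; tauto
        have hm1 : (A ∩ C).erase e₀ ⊆ A.erase e₀ ∩ insert e₀ C := by
          intro e he
          simp only [Finset.mem_erase, Finset.mem_inter] at he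
          simp only [Finset.mem_inter, Finset.mem_erase, Finset.mem_insert]
          exact ⟨⟨he.1, he.2.1⟩, Or.inr he.2.2⟩
        have hm2 : insert e₀ (A ∪ C) ⊆ A.erase e₀ ∪ insert e₀ C := by
          intro e he
          simp only [Finset.mem_insert, Finset.mem_union] at he
          simp only [Finset.mem_union, Finset.mem_erase, Finset.mem_insert]
          by_cases hc : e = e₀
          · exact Or.inr (Or.inl hc)
          · rcases he with rfl | he | he
            · exact Or.inr (Or.inl rfl)
            · exact Or.inl ⟨hc, he⟩
            · exact Or.inr (Or.inr he)
        have hm1' : (A ∩ C).erase e₀ ⊆ insert e₀ A ∩ C.erase e₀ := by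
          intro e he
          simp only [Finset.mem_erase, Finset.mem_inter] at he
          simp only [Finset.mem_inter, Finset.mem_erase, Finset.mem_insert]
          exact ⟨Or.inr he.2.1, he.1, he.2.2⟩
        have hm2' : insert e₀ (A ∪ C) ⊆ insert e₀ A ∪ C.erase e₀ := by
          intro e he
          simp only [Finset.mem_insert, Finset.mem_union] at he
          simp only [Finset.mem_union, Finset.mem_erase, Finset.mem_insert]
          by_cases hc : e = e₀
          · exact Or.inl (Or.inl hc)
          · rcases he with rfl | he | he
            · exact Or.inl (Or.inl rfl)
            · exact Or.inl (Or.inr he)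
            · exact Or.inr ⟨hc, he⟩
        have b1 : g' (A ∩ C) ≤ g ((A ∩ C).erase e₀) := min_le_left _ _
        have b2 : g' (A ∪ C) ≤ g ((A ∪ C).erase e₀) := min_le_left _ _
        have b3 : g' (A ∩ C) ≤ g (insert e₀ (A ∩ C)) - α := min_le_right _ _
        have b4 : g' (A ∪ C) ≤ g (insert e₀ (A ∪ C)) - α := min_le_right _ _
        rcases min_cases (g (A.erase e₀)) (g (insert e₀ A) - α) with ⟨hA, _⟩ | ⟨hA, _⟩ <;>
          rcases min_cases (g (C.erase e₀)) (g (insert e₀ C) - α) with ⟨hC, _⟩ | ⟨hC, _⟩ <;>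
          simp only [hg'def] at hA hC ⊢ <;> rw [hA, hC]
        · have h := hgs (A.erase e₀) (C.erase e₀)
          rw [← hi1, ← hi2] at h
          linarith
        · have h := hgs (A.erase e₀) (insert e₀ C)
          have c1 : g ((A ∩ C).erase e₀) ≤ g (A.erase e₀ ∩ insert e₀ C) := hgm hm1
          have c2 : g (insert e₀ (A ∪ C)) ≤ g (A.erase e₀ ∪ insert e₀ C) := hgm hm2
          linarith
        · have h := hgs (insert e₀ A) (C.erase e₀)
          have c1 : g ((A ∩ C).erase e₀) ≤ g (insert e₀ A ∩ C.erase e₀) := hgm hm1'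
          have c2 : g (insert e₀ (A ∪ C)) ≤ g (insert e₀ A ∪ C.erase e₀) := hgm hm2'
          linarith
        · have h := hgs (insert e₀ A) (insert e₀ C)
          rw [← hi3, ← hi4] at h
          linarith
      -- contracted demands
      set d' := fun k : B => d k - if k = k₀ then α else 0 with hd'def
      have hd' : ∀ k, 0 ≤ d' k := by
        intro k
        simp only [hd'def]
        split_ifs with h
        · rw [h]; linarith
        · simpa using hd k
      -- apply IH
      have hcard : (G.erase e₀).card < n := hGcard ▸ Finset.card_erase_lt_of_mem he₀
      obtain ⟨x', hx'0, hx's, hx'g, hx'cap, hx'val⟩ :=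
        IH (G.erase e₀).card hcard (G.erase e₀) rfl g' hg'0 hg'm hg's d' hd'
      have hx'e₀ : x' e₀ = 0 := hx's e₀ (Finset.notMem_erase _ _)
      refine ⟨fun e => x' e + if e = e₀ then α else 0, ?_, ?_, ?_, ?_, ?_⟩
      · intro e
        have h : (0:ℝ) ≤ if e = e₀ then α else 0 := by split_ifs <;> simp [hα0]
        show (0:ℝ) ≤ x' e + if e = e₀ then α else 0
        linarith [hx'0 e]
      · intro e he
        have h1 : x' e = 0 := hx's e fun hc => he (Finset.mem_of_mem_erase hc)
        have h2 : e ≠ e₀ := fun hc => he (hc ▸ he₀)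
        simp [h1, h2]
      · intro F
        have hsplit : vsum (fun e => x' e + if e = e₀ then α else 0) F
            = vsum x' F + (if e₀ ∈ F then α else 0) := by
          unfold vsum
          rw [Finset.sum_add_distrib]
          congr 1
          exact Finset.sum_ite_eq' F e₀ (fun _ => α)
        rw [hsplit]
        by_cases hF : e₀ ∈ F
        · have h1 : vsum x' F = vsum x' (F.erase e₀) :=
            (Finset.sum_erase F hx'e₀).symm
          have h2 := hx'g (F.erase e₀)
          have h3 : g' (F.erase e₀) ≤ g (insert e₀ (F.erase e₀)) - α := min_le_right _ _
          rw [Finset.insert_erase hF] at h3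
          simp only [hF, if_true]
          linarith
        · have h2 := hx'g F
          have h3 : g' F ≤ g (F.erase e₀) := min_le_left _ _
          rw [Finset.erase_eq_of_notMem hF] at h3
          simp only [hF, if_false]
          linarith
      · intro k
        have hsplit : vsum (fun e => x' e + if e = e₀ then α else 0)
              (G.filter fun e => e.1 = k)
            = vsum x' (G.filter fun e => e.1 = k)
              + (if e₀ ∈ G.filter (fun e => e.1 = k) then α else 0) := by
          unfold vsum
          rw [Finset.sum_add_distrib]
          congr 1
          exact Finset.sum_ite_eq' _ e₀ (fun _ => α)
        have hfe : (G.erase e₀).filter (fun e => e.1 = k)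
            = (G.filter fun e => e.1 = k).erase e₀ := by
          ext e
          simp only [Finset.mem_filter, Finset.mem_erase]
          tauto
        have h1 : vsum x' (G.filter fun e => e.1 = k)
            = vsum x' ((G.erase e₀).filter fun e => e.1 = k) := by
          rw [hfe]
          exact (Finset.sum_erase _ hx'e₀).symm
        have h2 := hx'cap k
        have h3 : e₀ ∈ G.filter (fun e => e.1 = k) ↔ k₀ = k := by
          simp only [Finset.mem_filter, he₀, true_and, hk₀]
        by_cases hk : k₀ = k
        · rw [hsplit, h1, if_pos (h3.mpr hk)]
          have h4 : d' k = d k - α := by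
            rw [hd'def]
            show d k - (if k = k₀ then α else 0) = d k - α
            rw [if_pos hk.symm]
          rw [h4] at h2
          linarith
        · rw [hsplit, h1, if_neg (fun hc => hk (h3.mp hc))]
          have h4 : d' k = d k := by
            rw [hd'def]
            show d k - (if k = k₀ then α else 0) = d k
            rw [if_neg (fun hc : k = k₀ => hk hc.symm)]
            ring
          rw [h4] at h2
          linarith
      · -- value
        have hsplit : vsum (fun e => x' e + if e = e₀ then α else 0) G
            = vsum x' G + α := by
          unfold vsum
          rw [Finset.sum_add_distrib]
          congr 1
          rw [Finset.sum_ite_eq' G e₀ (fun _ => α)]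
          simp [he₀]
        have h1 : vsum x' G = vsum x' (G.erase e₀) := (Finset.sum_erase G hx'e₀).symm
        rw [hsplit, h1]
        have hkey : θ - α ≤ theta g' d' (G.erase e₀) := by
          refine Finset.le_inf' _ _ fun K _ => ?_
          have hEXce : EXc K (G.erase e₀) = (EXc K G).erase e₀ := by
            ext e
            simp only [EXc, Finset.mem_filter, Finset.mem_erase]
            tauto
          have hdK : ∑ k ∈ K, d' k = (∑ k ∈ K, d k) - (if k₀ ∈ K then α else 0) := by
            simp only [hd'def]
            rw [Finset.sum_sub_distrib]
            congr 1
            exact Finset.sum_ite_eq' K k₀ (fun _ => α)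
          set H := EXc K G with hH
          rw [hEXce, hdK]
          by_cases hk : k₀ ∈ K
          · have he₀H : e₀ ∉ H := by simp [hH, EXc, ← hk₀, hk]
            have hHe : H.erase e₀ = H := Finset.erase_eq_of_notMem he₀H
            simp only [hg'def]
            rw [if_pos hk, Finset.erase_idem, hHe]
            have hb1 := theta_le g d G K
            rw [← hθdef, ← hH] at hb1
            have hb2 := hα3 K hk
            rw [← hH] at hb2
            rcases min_cases (g H) (g (insert e₀ H) - α) with ⟨hm, _⟩ | ⟨hm, _⟩ <;>
              rw [hm] <;> linarith
          · have he₀H : e₀ ∈ H := by simp [hH, EXc, he₀, ← hk₀, hk]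
            have hins : insert e₀ (H.erase e₀) = H := Finset.insert_erase he₀H
            simp only [hg'def]
            rw [if_neg hk, Finset.erase_idem, hins]
            have hb1 := theta_le g d G K
            rw [← hθdef, ← hH] at hb1
            have hb2 := hlow K hk
            rw [← hH] at hb2
            rcases min_cases (g (H.erase e₀)) (g H - α) with ⟨hm, _⟩ | ⟨hm, _⟩ <;>
              rw [hm] <;> linarith
        linarith [hx'val]

end Exists
section Bridge
variable {E : Finset (B × S)} {fj : S → Finset (B × S) → ℝ} {w : B × S → ℝ} {d : B → ℝ}
variable (hfj : ∀ j : S, IsMonoSubmodular (Ej E j) (fj j))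
variable (hw : memP E fj w) (hd : ∀ k : B, 0 ≤ d k)

include hfj hw in
/-- elements of the remnant polytope satisfy `x(H) ≤ f_w(H)`. -/
lemma memPwd_le_fw {x : B × S → ℝ} (hx : memPwd E fj w d x)
    {H : Finset (B × S)} (hH : H ⊆ E) : vsum x H ≤ fw E fj w H := by
  obtain ⟨hx0, hxs, hxP, hxcap⟩ := hx
  refine le_fw hH fun F' h1 h2 => ?_
  have h3 : vsum x H ≤ vsum x F' := vsum_mono hx0 h1
  have h4 : vsum (w + x) F' ≤ fTot E fj F' := vsum_le_fTot hfj hxP.2.2 h2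
  rw [vsum_add] at h4
  linarith

include hfj hw in
/-- sufficient conditions for membership in the remnant polytope. -/
lemma memPwd_of {x : B × S → ℝ} {G : Finset (B × S)} (hGE : G ⊆ E)
    (hx0 : ∀ e, 0 ≤ x e) (hxs : ∀ e ∉ G, x e = 0)
    (hxg : ∀ F : Finset (B × S), vsum x F ≤ fw E fj w (F ∩ E))
    (hcap : ∀ k : B, vsum x (G.filter fun e => e.1 = k) ≤ d k) :
    memPwd E fj w d x := by
  have hxsE : ∀ e ∉ E, x e = 0 := fun e he => hxs e fun hc => he (hGE hc)
  refine ⟨hx0, hxsE, ⟨fun e => add_nonneg (hw.1 e) (hx0 e),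
    fun e he => by rw [Pi.add_apply, hw.2.1 e he, hxsE e he, add_zero], fun j F hF => ?_⟩,
    fun k => ?_⟩
  · have hFE : F ⊆ E := hF.trans (Finset.filter_subset _ _)
    have h1 : vsum x F ≤ fw E fj w F := by
      have := hxg F
      rwa [Finset.inter_eq_left.mpr hFE] at this
    have h2 : fw E fj w F ≤ fTot E fj F - vsum w F := fw_le (le_refl F) hFE
    have h3 : fTot E fj F = fj j F := fTot_of_subset_Ej hfj hF
    rw [vsum_add]
    linarith
  · have h1 : Ei E k ∩ G = G.filter fun e => e.1 = k := by
      ext e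
      simp only [Ei, Finset.mem_inter, Finset.mem_filter]
      constructor
      · rintro ⟨⟨_, h2⟩, h3⟩; exact ⟨h3, h2⟩
      · rintro ⟨h3, h2⟩; exact ⟨⟨hGE h3, h2⟩, h3⟩
    rw [vsum_support hxs, h1]
    exact hcap k

include hw hd in
lemma memPwd_zero : memPwd E fj w d 0 := by
  refine ⟨fun e => le_refl 0, fun e _ => rfl, ?_, fun k => ?_⟩
  · have : w + 0 = w := by funext e; simp
    rw [this]; exact hw
  · simpa [vsum] using hd k

include hfj hw hd in
lemma fwd_nonempty (G : Finset (B × S)) :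
    {r : ℝ | ∃ x : B × S → ℝ, memPwd E fj w d x ∧ r = vsum x G}.Nonempty :=
  ⟨vsum 0 G, 0, memPwd_zero hw hd, rfl⟩

include hfj hw in
lemma fwd_bddAbove {G : Finset (B × S)} (hG : G ⊆ E) :
    BddAbove {r : ℝ | ∃ x : B × S → ℝ, memPwd E fj w d x ∧ r = vsum x G} := by
  refine ⟨fw E fj w G, fun r hr => ?_⟩
  obtain ⟨x, hx, rfl⟩ := hr
  exact memPwd_le_fw hfj hw hx hG

end Bridge

/-- for `Y ⊆ N - i`,
`min_{F ⊆ E_i} (f_{w,d}(E_Y ∪ F) - ξ(F)) =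
  min_{Z ⊆ Y, F ⊆ E_i} (f_w(E_Z ∪ F) + d(Y \ Z) - ξ(F))`. -/
theorem h_xi_eq_tilde_h_xi
    (E : Finset (B × S)) (fj : S → Finset (B × S) → ℝ)
    (hfj : ∀ j : S, IsMonoSubmodular (Ej E j) (fj j))
    (w : B × S → ℝ) (hw : memP E fj w)
    (d : B → ℝ) (hd : ∀ i : B, 0 ≤ d i)
    (i : B) (ξ : B × S → ℝ) (hξ0 : ∀ e, 0 ≤ ξ e) (hξs : ∀ e ∉ Ei E i, ξ e = 0)
    (hξd : vsum ξ (Ei E i) ≤ d i)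
    (Y : Finset B) (hY : Y ⊆ Finset.univ.erase i) :
    (Ei E i).powerset.inf' ⟨∅, Finset.empty_mem_powerset _⟩
      (fun F => fwd E fj w d (EX E Y ∪ F) - vsum ξ F) =
    (Y.powerset ×ˢ (Ei E i).powerset).inf' ⟨(∅, ∅), by simp⟩
      (fun p => fw E fj w (EX E p.1 ∪ p.2) + ∑ k ∈ Y \ p.1, d k - vsum ξ p.2) := by
  have hiY : i ∉ Y := fun h => (Finset.mem_erase.mp (hY h)).1 rfl
  -- the extension of f_w to a monotone submodular function on all of 2^(B×S)
  set gbar := fun F : Finset (B × S) => fw E fj w (F ∩ E) with hgbar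
  have hg0 : gbar ∅ = 0 := by
    simp only [hgbar, Finset.empty_inter]
    exact fw_empty hfj hw.2.2
  have hgm : ∀ {A C : Finset (B × S)}, A ⊆ C → gbar A ≤ gbar C := by
    intro A C h
    exact fw_mono (Finset.inter_subset_inter h (le_refl E)) Finset.inter_subset_right
  have hgs : ∀ A C : Finset (B × S), gbar (A ∩ C) + gbar (A ∪ C) ≤ gbar A + gbar C := by
    intro A C
    have h1 : (A ∩ C) ∩ E = (A ∩ E) ∩ (C ∩ E) := by
      ext e; simp only [Finset.mem_inter]; tauto
    have h2 : (A ∪ C) ∩ E = (A ∩ E) ∪ (C ∩ E) := by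
      ext e; simp only [Finset.mem_inter, Finset.mem_union]; tauto
    simp only [hgbar, h1, h2]
    exact fw_submod hfj _ _ Finset.inter_subset_right Finset.inter_subset_right
  refine le_antisymm ?_ ?_
  · -- LHS ≤ RHS : weak duality
    refine Finset.le_inf' _ _ fun p hp => ?_
    rw [Finset.mem_product, Finset.mem_powerset, Finset.mem_powerset] at hp
    obtain ⟨hZ, hF⟩ := hp
    have hGE : EX E Y ∪ p.2 ⊆ E :=
      Finset.union_subset (Finset.filter_subset _ _) (hF.trans (Finset.filter_subset _ _))
    have step : fwd E fj w d (EX E Y ∪ p.2)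
        ≤ fw E fj w (EX E p.1 ∪ p.2) + ∑ k ∈ Y \ p.1, d k := by
      refine csSup_le (fwd_nonempty hfj hw hd _) ?_
      rintro r ⟨x, hx, rfl⟩
      have hsub : EX E Y ∪ p.2 ⊆ (EX E p.1 ∪ p.2) ∪ EX E (Y \ p.1) := by
        intro e he
        rcases Finset.mem_union.mp he with he | he
        · simp only [EX, Finset.mem_filter] at he
          by_cases hc : e.1 ∈ p.1
          · exact Finset.mem_union_left _ (Finset.mem_union_left _
              (Finset.mem_filter.mpr ⟨he.1, hc⟩))
          · exact Finset.mem_union_right _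
              (Finset.mem_filter.mpr ⟨he.1, Finset.mem_sdiff.mpr ⟨he.2, hc⟩⟩)
        · exact Finset.mem_union_left _ (Finset.mem_union_right _ he)
      have c1 : vsum x (EX E Y ∪ p.2) ≤ vsum x ((EX E p.1 ∪ p.2) ∪ EX E (Y \ p.1)) :=
        vsum_mono hx.1 hsub
      have c2 : vsum x ((EX E p.1 ∪ p.2) ∪ EX E (Y \ p.1))
          ≤ vsum x (EX E p.1 ∪ p.2) + vsum x (EX E (Y \ p.1)) := vsum_union_le hx.1 _ _
      have c3 : vsum x (EX E p.1 ∪ p.2) ≤ fw E fj w (EX E p.1 ∪ p.2) :=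
        memPwd_le_fw hfj hw hx (Finset.union_subset (Finset.filter_subset _ _)
          (hF.trans (Finset.filter_subset _ _)))
      have c4 : vsum x (EX E (Y \ p.1)) ≤ ∑ k ∈ Y \ p.1, d k := by
        rw [vsum_buyer]
        exact Finset.sum_le_sum fun k _ => hx.2.2.2 k
      linarith
    have h1 : (Ei E i).powerset.inf' ⟨∅, Finset.empty_mem_powerset _⟩
        (fun F => fwd E fj w d (EX E Y ∪ F) - vsum ξ F)
        ≤ fwd E fj w d (EX E Y ∪ p.2) - vsum ξ p.2 :=
      Finset.inf'_le _ (Finset.mem_powerset.mpr hF)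
    linarith
  · -- RHS ≤ LHS : via the existence theorem
    refine Finset.le_inf' _ _ fun F hF => ?_
    rw [Finset.mem_powerset] at hF
    have hFi : ∀ e ∈ F, e.1 = i := fun e he => (Finset.mem_filter.mp (hF he)).2
    set G := EX E Y ∪ F with hGdef
    have hGE : G ⊆ E :=
      Finset.union_subset (Finset.filter_subset _ _) (hF.trans (Finset.filter_subset _ _))
    obtain ⟨x, hx0, hxs, hxg, hxcap, hxval⟩ :=
      exists_opt G.card G rfl gbar hg0 hgm hgs d hd
    have hxmem : memPwd E fj w d x := memPwd_of hfj hw hGE hx0 hxs hxg hxcap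
    have h1 : theta gbar d G ≤ fwd E fj w d G :=
      le_trans hxval (le_csSup (fwd_bddAbove hfj hw hGE) ⟨x, hxmem, rfl⟩)
    obtain ⟨K, hK⟩ := theta_exists gbar d G
    have hξF : vsum ξ F ≤ d i := le_trans (vsum_mono hξ0 hF) hξd
    have hidY : (EX E Y).filter (fun e => e.1 ∉ K) = EX E (Y \ K) := by
      ext e
      simp only [EX, Finset.mem_filter, Finset.mem_sdiff]
      tauto
    have hid : EXc K G = EX E (Y \ K) ∪ F.filter (fun e => e.1 ∉ K) := by
      simp only [EXc, hGdef, Finset.filter_union, hidY]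
    have hZY : Y \ K ⊆ Y := Finset.sdiff_subset
    have hYZ : Y \ (Y \ K) = Y ∩ K := Finset.sdiff_sdiff_self_left Y K
    by_cases hiK : i ∈ K
    · -- use the pair (Y \ K, ∅)
      have hidF : F.filter (fun e => e.1 ∉ K) = ∅ :=
        Finset.filter_false_of_mem fun e he => by
          simp only [not_not]
          rw [hFi e he]; exact hiK
      have hgb : gbar (EXc K G) = fw E fj w (EX E (Y \ K) ∪ ∅) := by
        simp only [hgbar]
        rw [hid, hidF, Finset.union_empty]
        congr 1
        exact Finset.inter_eq_left.mpr (Finset.filter_subset _ _)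
      have hsum : (∑ k ∈ Y ∩ K, d k) + vsum ξ F ≤ ∑ k ∈ K, d k := by
        have h2 : insert i (Y ∩ K) ⊆ K :=
          Finset.insert_subset hiK Finset.inter_subset_right
        have h3 : i ∉ Y ∩ K := fun hc => hiY (Finset.mem_inter.mp hc).1
        have h4 : ∑ k ∈ insert i (Y ∩ K), d k = d i + ∑ k ∈ Y ∩ K, d k :=
          Finset.sum_insert h3
        have h5 : ∑ k ∈ insert i (Y ∩ K), d k ≤ ∑ k ∈ K, d k :=
          Finset.sum_le_sum_of_subset_of_nonneg h2 fun k _ _ => hd k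
        linarith
      have hmem : ((Y \ K, (∅ : Finset (B × S)))) ∈ Y.powerset ×ˢ (Ei E i).powerset := by
        rw [Finset.mem_product, Finset.mem_powerset, Finset.mem_powerset]
        exact ⟨hZY, Finset.empty_subset _⟩
      have h4 := Finset.inf'_le
        (fun p : Finset B × Finset (B × S) =>
          fw E fj w (EX E p.1 ∪ p.2) + ∑ k ∈ Y \ p.1, d k - vsum ξ p.2) hmem
      simp only [hYZ] at h4
      have h5 : vsum ξ (∅ : Finset (B × S)) = 0 := by simp [vsum]
      rw [h5] at h4
      rw [hK, hgb] at h1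
      linarith
    · -- use the pair (Y \ K, F)
      have hidF : F.filter (fun e => e.1 ∉ K) = F :=
        Finset.filter_true_of_mem fun e he => by rw [hFi e he]; exact hiK
      have hgb : gbar (EXc K G) = fw E fj w (EX E (Y \ K) ∪ F) := by
        simp only [hgbar]
        rw [hid, hidF]
        congr 1
        exact Finset.inter_eq_left.mpr (Finset.union_subset (Finset.filter_subset _ _)
          (hF.trans (Finset.filter_subset _ _)))
      have hsum : ∑ k ∈ Y ∩ K, d k ≤ ∑ k ∈ K, d k :=
        Finset.sum_le_sum_of_subset_of_nonneg Finset.inter_subset_right fun k _ _ => hd k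
      have hmem : ((Y \ K, F)) ∈ Y.powerset ×ˢ (Ei E i).powerset := by
        rw [Finset.mem_product, Finset.mem_powerset, Finset.mem_powerset]
        exact ⟨hZY, hF⟩
      have h4 := Finset.inf'_le
        (fun p : Finset B × Finset (B × S) =>
          fw E fj w (EX E p.1 ∪ p.2) + ∑ k ∈ Y \ p.1, d k - vsum ξ p.2) hmem
      simp only [hYZ] at h4
      rw [hK, hgb] at h1
      linarith


end TwoSidedMarket
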